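/- Assume n ≥ 3, the dual graph Γ of A is a cycle (Γ is connected and every vertex is adjacent to exactly two other vertices), and C(A)_i ≤ 0 for all i. Then A satisfies (NN) if and only if there exist at least two indices i with C(A)_i < 0. -/

import Mathlib

/-- `A` is negative definite: `xᵀAx < 0` for every nonzero real vector `x`. -/
def NegDefQ {V : Type*} [Fintype V] (A : Matrix V V ℚ) : Prop :=
  ∀ x : V → ℝ, x ≠ 0 → ∑ i, ∑ j, x i * (A i j : ℝ) * x j < 0

/-- Numerical Nash condition `NN_(i,j)`: for every rational vector `C` with nonpositive
entries there is an integer vector `X` with positive entries such that `(AX)_k ≤ C_k`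
for all `k` and `X i < X j`. -/
def NashNN {V : Type*} [Fintype V] (A : Matrix V V ℚ) (i j : V) : Prop :=
  ∀ C : V → ℚ, (∀ k, C k ≤ 0) →
    ∃ X : V → ℤ, (∀ k, 0 < X k) ∧ (∀ k, ∑ t, A k t * (X t : ℚ) ≤ C k) ∧ X i < X j

/-- Condition `(NN)`: `NN_(i,j)` for every ordered pair of distinct indices. -/
def NashNNAll {V : Type*} [Fintype V] (A : Matrix V V ℚ) : Prop :=
  ∀ i j : V, i ≠ j → NashNN A i j

/-- The dual graph of `A`: edge between distinct `i, j` iff `A i j > 0`. -/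
def dualGraph {V : Type*} (A : Matrix V V ℚ) : SimpleGraph V :=
  SimpleGraph.fromRel fun i j => 0 < A i j

/-- A leaf of a graph: a vertex adjacent to exactly one other vertex. -/
def IsLeaf {V : Type*} (G : SimpleGraph V) (i : V) : Prop :=
  ∃! j, G.Adj i j


lemma qneg {n : ℕ} {A : Matrix (Fin n) (Fin n) ℚ} (hneg : NegDefQ A)
    (x : Fin n → ℚ) (hx : x ≠ 0) : ∑ k, ∑ t, x k * A k t * x t < 0 := by
  have hx' : (fun k => (x k : ℝ)) ≠ 0 := by
    intro h
    apply hx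
    funext k
    have h2 : ((x k : ℝ)) = 0 := congrFun h k
    exact_mod_cast h2
  have h := hneg (fun k => (x k : ℝ)) hx'
  have hcast : ((∑ k, ∑ t, x k * A k t * x t : ℚ) : ℝ)
      = ∑ k, ∑ t, (x k : ℝ) * (A k t : ℝ) * (x t : ℝ) := by
    push_cast
    rfl
  exact_mod_cast hcast ▸ h

lemma qzero {n : ℕ} {A : Matrix (Fin n) (Fin n) ℚ} (hneg : NegDefQ A)
    (x : Fin n → ℚ) (hx : 0 ≤ ∑ k, ∑ t, x k * A k t * x t) : x = 0 := by
  by_contra hc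
  exact absurd hx (not_le.2 (qneg hneg x hc))

lemma trick {n : ℕ} {A : Matrix (Fin n) (Fin n) ℚ}
    (hoff : ∀ i j, i ≠ j → 0 ≤ A i j) (hneg : NegDefQ A)
    (Y : Fin n → ℚ) (h : ∀ k, Y k < 0 → ∑ t, A k t * Y t ≤ 0) :
    ∀ k, 0 ≤ Y k := by
  set N : Fin n → ℚ := fun k => max (-Y k) 0 with hNdef
  have hN0 : ∀ k, 0 ≤ N k := fun k => le_max_right _ _
  have hNeg : ∀ k, Y k < 0 → N k = -Y k := by
    intro k hk
    exact max_eq_left (by linarith)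
  have hNz : ∀ k, 0 ≤ Y k → N k = 0 := by
    intro k hk
    exact max_eq_right (by linarith)
  have hNP : ∀ k, N k * (Y k + N k) = 0 := by
    intro k
    rcases lt_or_ge (Y k) 0 with hk | hk
    · rw [hNeg k hk]; ring
    · rw [hNz k hk]; ring
  have hP0 : ∀ k, 0 ≤ Y k + N k := by
    intro k
    rcases lt_or_ge (Y k) 0 with hk | hk
    · rw [hNeg k hk]; linarith
    · rw [hNz k hk]; linarith
  have h1 : 0 ≤ ∑ k, ∑ t, N k * A k t * (Y t + N t) := by
    apply Finset.sum_nonneg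
    intro k _
    apply Finset.sum_nonneg
    intro t _
    rcases eq_or_ne k t with rfl | hkt
    · have : N k * A k k * (Y k + N k) = A k k * (N k * (Y k + N k)) := by ring
      rw [this, hNP k, mul_zero]
    · exact mul_nonneg (mul_nonneg (hN0 k) (hoff k t hkt)) (hP0 t)
  have h2 : ∑ k, ∑ t, N k * A k t * Y t ≤ 0 := by
    apply Finset.sum_nonpos
    intro k _
    have : ∑ t, N k * A k t * Y t = N k * ∑ t, A k t * Y t := by
      rw [Finset.mul_sum]; congr 1; funext t; ring
    rw [this]
    rcases lt_or_ge (Y k) 0 with hk | hk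
    · exact mul_nonpos_of_nonneg_of_nonpos (hN0 k) (h k hk)
    · rw [hNz k hk, zero_mul]
  have key : 0 ≤ ∑ k, ∑ t, N k * A k t * N t := by
    have hsplit : ∑ k, ∑ t, N k * A k t * N t
        = (∑ k, ∑ t, N k * A k t * (Y t + N t)) - ∑ k, ∑ t, N k * A k t * Y t := by
      rw [← Finset.sum_sub_distrib]
      congr 1; funext k
      rw [← Finset.sum_sub_distrib]
      congr 1; funext t
      ring
    rw [hsplit]
    linarith
  have hNzero := qzero hneg N key
  intro k
  have := congrFun hNzero k
  rcases lt_or_ge (Y k) 0 with hk | hk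
  · rw [hNeg k hk] at this; simp at this; linarith
  · exact hk

lemma exists_sol {n : ℕ} {A : Matrix (Fin n) (Fin n) ℚ}
    (hoff : ∀ i j, i ≠ j → 0 ≤ A i j) (hneg : NegDefQ A)
    (b : Fin n → ℚ) : ∃ u : Fin n → ℚ, ∀ k, ∑ t, A k t * u t = b k := by
  have hmv : ∀ (u : Fin n → ℚ) (k), A.mulVecLin u k = ∑ t, A k t * u t := by
    intro u k
    simp [Matrix.mulVecLin, Matrix.mulVec, dotProduct]
  have hinj : Function.Injective A.mulVecLin := by
    rw [← LinearMap.ker_eq_bot, LinearMap.ker_eq_bot']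
    intro u hu
    have hu' : ∀ k, ∑ t, A k t * u t = 0 := by
      intro k
      rw [← hmv u k, hu]
      rfl
    have h1 : ∀ k, 0 ≤ u k := by
      apply trick hoff hneg
      intro k _
      rw [hu' k]
    have h2 : ∀ k, 0 ≤ -u k := by
      apply trick hoff hneg
      intro k _
      have : ∑ t, A k t * -u t = -∑ t, A k t * u t := by
        rw [← Finset.sum_neg_distrib]
        congr 1; funext t; ring
      rw [this, hu' k, neg_zero]
    funext k
    have := h1 k
    have := h2 k
    simp only [Pi.zero_apply]
    linarith
  have hsurj : Function.Surjective A.mulVecLin :=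
    (LinearMap.injective_iff_surjective).mp hinj
  obtain ⟨u, hu⟩ := hsurj b
  exact ⟨u, fun k => by rw [← hmv u k, hu]⟩

lemma adj_iff {n : ℕ} {A : Matrix (Fin n) (Fin n) ℚ} (hsym : ∀ i j, A i j = A j i)
    {k t : Fin n} : (dualGraph A).Adj k t ↔ k ≠ t ∧ 0 < A k t := by
  unfold dualGraph
  rw [SimpleGraph.fromRel_adj]
  constructor
  · rintro ⟨hne, h | h⟩
    · exact ⟨hne, h⟩
    · exact ⟨hne, (hsym k t) ▸ h⟩
  · rintro ⟨hne, h⟩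
    exact ⟨hne, Or.inl h⟩

lemma walk_closed {V : Type*} {G : SimpleGraph V} {P : V → Prop}
    (hP : ∀ a, P a → ∀ t, G.Adj a t → P t) {a b : V} (w : G.Walk a b)
    (ha : P a) : P b := by
  induction w with
  | nil => exact ha
  | cons h _ ih => exact ih (hP _ ha _ h)

section GraphLemmas
variable {n : ℕ} {A : Matrix (Fin n) (Fin n) ℚ}

/-- degree 2 -/
lemma deg_two (hcycle : ∀ i : Fin n, ∃ j k : Fin n, j ≠ k ∧
      ∀ m : Fin n, (dualGraph A).Adj i m ↔ (m = j ∨ m = k))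
    [DecidableRel (dualGraph A).Adj] (k : Fin n) :
    (Finset.univ.filter (fun t => (dualGraph A).Adj k t)).card = 2 := by
  obtain ⟨c, d, hcd, hch⟩ := hcycle k
  have : Finset.univ.filter (fun t => (dualGraph A).Adj k t) = {c, d} := by
    ext m
    simp [hch m]
  rw [this]
  rw [Finset.card_insert_of_notMem (by simp [hcd]), Finset.card_singleton]

lemma parity_case
    (hcycle : ∀ i : Fin n, ∃ j k : Fin n, j ≠ k ∧
      ∀ m : Fin n, (dualGraph A).Adj i m ↔ (m = j ∨ m = k))
    [DecidableRel (dualGraph A).Adj]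
    {j j1 j2 : Fin n}
    (hchar : ∀ m, (dualGraph A).Adj j m ↔ (m = j1 ∨ m = j2))
    (Z : Finset (Fin n)) (hjZ : j ∈ Z) (h1 : j1 ∈ Z) (h2 : j2 ∉ Z)
    (hcl : ∀ k ∈ Z, k ≠ j → ∀ t, (dualGraph A).Adj k t → t ∈ Z) :
    False := by
  set G := dualGraph A with hG
  set W : Finset (Fin n) := Zᶜ with hW
  have hj2W : j2 ∈ W := Finset.mem_compl.2 h2
  have hkj2 : j2 ≠ j := fun h => h2 (h ▸ hjZ)
  have hWZ : ∀ k ∈ W, k ∉ Z := fun k hk => Finset.mem_compl.1 hk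
  have hZfilter : ∀ k ∈ W, Z.filter (fun t => G.Adj k t) = if k = j2 then {j} else ∅ := by
    intro k hk
    ext t
    constructor
    · intro ht
      obtain ⟨htZ, hadj⟩ := Finset.mem_filter.1 ht
      have htj : t = j := by
        by_contra htj
        exact hWZ k hk (hcl t htZ htj k hadj.symm)
      subst htj
      have hor : k = j1 ∨ k = j2 := (hchar k).1 hadj.symm
      have hkj2' : k = j2 := by
        rcases hor with h | h
        · subst h
          exact absurd (hWZ k hk) (by simp [h1])
        · exact h
      simp [hkj2', Finset.mem_filter]
    · intro ht
      by_cases hkk : k = j2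
      · simp [hkk] at ht
        subst ht
        refine Finset.mem_filter.2 ⟨hjZ, ?_⟩
        rw [hkk]
        exact ((hchar j2).2 (Or.inr rfl)).symm
      · simp [hkk] at ht
  have hsplit : ∀ k, (Z.filter (fun t => G.Adj k t)).card
      + (W.filter (fun t => G.Adj k t)).card = 2 := by
    intro k
    rw [← deg_two hcycle k]
    rw [← Finset.card_union_of_disjoint
      (Finset.disjoint_filter_filter disjoint_compl_right)]
    congr 1
    rw [← Finset.filter_union, hW, Finset.union_compl]
  have hsum1 : ∑ k ∈ W, (Z.filter (fun t => G.Adj k t)).card = 1 := by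
    have hcg : ∀ k ∈ W, (Z.filter (fun t => G.Adj k t)).card = if k = j2 then 1 else 0 := by
      intro k hk
      rw [hZfilter k hk]
      split <;> simp
    rw [Finset.sum_congr rfl hcg, Finset.sum_ite_eq' W j2 (fun _ => 1)]
    simp [hj2W]
  have hsum2 : (∑ k ∈ W, (W.filter (fun t => G.Adj k t)).card) + 1 = 2 * W.card := by
    rw [← hsum1, ← Finset.sum_add_distrib]
    have hcg : ∀ k ∈ W, (W.filter (fun t => G.Adj k t)).card
        + (Z.filter (fun t => G.Adj k t)).card = 2 := by
      intro k _
      rw [add_comm]; exact hsplit k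
    rw [Finset.sum_congr rfl hcg, Finset.sum_const, smul_eq_mul, mul_comm]
  have heven : ((∑ k ∈ W, (W.filter (fun t => G.Adj k t)).card : ℕ) : ZMod 2) = 0 := by
    have hre : ∀ k, (W.filter (fun t => G.Adj k t)).card
        = ∑ t ∈ W, if G.Adj k t then 1 else 0 := by
      intro k
      rw [Finset.card_filter]
    simp_rw [hre]
    push_cast
    rw [← Finset.sum_product']
    apply Finset.sum_involution (fun a _ => (a.2, a.1))
    · intro a ha
      by_cases h : G.Adj a.1 a.2
      · have h' : G.Adj a.2 a.1 := h.symm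
        simp only [h, h', if_true]
        decide
      · have h' : ¬ G.Adj a.2 a.1 := fun hh => h hh.symm
        simp [h, h']
    · intro a ha hne hcontra
      have heq : a.2 = a.1 := congrArg Prod.fst hcontra
      apply hne
      have hnadj : ¬ G.Adj a.1 a.2 := by
        rw [← heq]
        exact fun hadj => G.loopless.irrefl _ (heq ▸ hadj)
      simp [hnadj]
    · intro a ha
      obtain ⟨ha1, ha2⟩ := Finset.mem_product.1 ha
      exact Finset.mem_product.2 ⟨ha2, ha1⟩
    · intro a ha
      rfl
  have hfin := congrArg (Nat.cast (R := ZMod 2)) hsum2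
  push_cast at hfin heven
  rw [heven] at hfin
  have h20 : (2 : ZMod 2) = 0 := by decide
  rw [h20, zero_mul, zero_add] at hfin
  exact absurd hfin (by decide)

lemma graph_key
    (hconn : (dualGraph A).Connected)
    (hcycle : ∀ i : Fin n, ∃ j k : Fin n, j ≠ k ∧
      ∀ m : Fin n, (dualGraph A).Adj i m ↔ (m = j ∨ m = k))
    [DecidableRel (dualGraph A).Adj]
    {j p i : Fin n} (hp : p ≠ j) (hi : i ≠ j)
    (Z : Finset (Fin n)) (hjZ : j ∈ Z) (hpZ : p ∈ Z)
    (hcl : ∀ k ∈ Z, k ≠ j → ∀ t, (dualGraph A).Adj k t → t ∈ Z) :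
    i ∈ Z := by
  obtain ⟨j1, j2, hj12, hchar⟩ := hcycle j
  by_cases h1 : j1 ∈ Z
  · by_cases h2 : j2 ∈ Z
    · -- Z fully closed
      have hcl' : ∀ a, a ∈ Z → ∀ t, (dualGraph A).Adj a t → t ∈ Z := by
        intro a ha t hadj
        by_cases haj : a = j
        · subst haj
          rcases (hchar t).1 hadj with rfl | rfl
          · exact h1
          · exact h2
        · exact hcl a ha haj t hadj
      obtain ⟨w⟩ := hconn.preconnected p i
      exact walk_closed hcl' w hpZ
    · exact absurd (parity_case hcycle hchar Z hjZ h1 h2 hcl) id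
  · by_cases h2 : j2 ∈ Z
    · have hchar' : ∀ m, (dualGraph A).Adj j m ↔ (m = j2 ∨ m = j1) := by
        intro m
        rw [hchar m, or_comm]
      exact absurd (parity_case hcycle hchar' Z hjZ h2 h1 hcl) id
    · -- Z.erase j fully closed; reaching j gives contradiction
      exfalso
      have hcl' : ∀ a, a ∈ Z.erase j → ∀ t, (dualGraph A).Adj a t → t ∈ Z.erase j := by
        intro a ha t hadj
        have haZ : a ∈ Z := Finset.mem_of_mem_erase ha
        have haj : a ≠ j := Finset.ne_of_mem_erase ha
        have htZ : t ∈ Z := hcl a haZ haj t hadj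
        refine Finset.mem_erase.2 ⟨?_, htZ⟩
        intro htj
        rw [htj] at hadj
        rcases (hchar a).1 hadj.symm with rfl | rfl
        · exact h1 haZ
        · exact h2 haZ
      obtain ⟨w⟩ := hconn.preconnected p j
      have : j ∈ Z.erase j := walk_closed hcl' w (Finset.mem_erase.2 ⟨hp, hpZ⟩)
      exact (Finset.mem_erase.1 this).1 rfl

end GraphLemmas

section Analytic
variable {n : ℕ} {A : Matrix (Fin n) (Fin n) ℚ}

lemma bilin_swap (hsym : ∀ i j, A i j = A j i) (x y : Fin n → ℚ) :
    ∑ k, ∑ t, x k * A k t * y t = ∑ k, ∑ t, y k * A k t * x t := by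
  rw [Finset.sum_comm]
  exact Finset.sum_congr rfl fun t _ => Finset.sum_congr rfl fun k _ => by
    rw [hsym]; ring

lemma exists_z (hoff : ∀ i j, i ≠ j → 0 ≤ A i j) (hneg : NegDefQ A)
    (hdiag : ∀ i, A i i < 0) :
    ∃ z : Fin n → ℚ, (∀ k, 0 < z k) ∧ (∀ k, ∑ t, A k t * z t = -1) := by
  obtain ⟨z, hz⟩ := exists_sol hoff hneg (fun _ => (-1 : ℚ))
  have hz0 : ∀ k, 0 ≤ z k := by
    apply trick hoff hneg
    intro k _
    rw [hz k]
    norm_num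
  refine ⟨z, fun k => ?_, hz⟩
  rcases lt_or_eq_of_le (hz0 k) with h | h
  · exact h
  · exfalso
    have hge : 0 ≤ ∑ t, A k t * z t := by
      apply Finset.sum_nonneg
      intro t _
      rcases eq_or_ne t k with rfl | hne
      · rw [← h, mul_zero]
      · exact mul_nonneg (hoff k t (Ne.symm hne)) (hz0 t)
    rw [hz k] at hge
    norm_num at hge


lemma sum_single (f : Fin n → ℚ) (j : Fin n) :
    ∑ k, f k * (if k = j then (-1:ℚ) else 0) = -f j := by
  simp [mul_ite]

lemma exists_u (hsym : ∀ i j, A i j = A j i) (hdiag : ∀ i, A i i < 0)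
    (hoff : ∀ i j, i ≠ j → 0 ≤ A i j) (hneg : NegDefQ A)
    (hconn : (dualGraph A).Connected)
    (hcycle : ∀ i : Fin n, ∃ j k : Fin n, j ≠ k ∧
      ∀ m : Fin n, (dualGraph A).Adj i m ↔ (m = j ∨ m = k))
    (hC : ∀ i, ∑ j, A i j ≤ 0)
    {p q i j : Fin n} (hpq : p ≠ q)
    (hp : ∑ t, A p t < 0) (hq : ∑ t, A q t < 0) (hij : i ≠ j) :
    ∃ u : Fin n → ℚ, (∀ k, 0 ≤ u k) ∧
      (∀ k, ∑ t, A k t * u t = if k = j then -1 else 0) ∧ u i < u j := by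
  classical
  obtain ⟨u, hu⟩ := exists_sol hoff hneg (fun k => if k = j then (-1 : ℚ) else 0)
  have hu0 : ∀ k, 0 ≤ u k := by
    apply trick hoff hneg
    intro k _
    rw [hu k]
    split <;> norm_num
  have humax : ∀ k, u k ≤ u j := by
    have key := trick hoff hneg (fun k => u j - u k) ?_
    · intro k
      have := key k
      linarith
    · intro k hk
      have hkj : k ≠ j := by
        intro h
        rw [h] at hk
        simp at hk
      have hexp : ∑ t, A k t * (u j - u t) = u j * (∑ t, A k t) - ∑ t, A k t * u t := by
        rw [Finset.mul_sum, ← Finset.sum_sub_distrib]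
        exact Finset.sum_congr rfl fun t _ => by ring
      rw [hexp, hu k, if_neg hkj, sub_zero]
      exact mul_nonpos_iff.2 (Or.inl ⟨hu0 j, hC k⟩)
  refine ⟨u, hu0, hu, ?_⟩
  rcases lt_or_eq_of_le (humax i) with h | heq
  · exact h
  exfalso
  -- u i = u j; derive a contradiction
  obtain ⟨ui, hui⟩ := exists_sol hoff hneg (fun k => if k = i then (-1 : ℚ) else 0)
  set w : Fin n → ℚ := fun k => u k - ui k with hw
  have hAw : ∀ k, ∑ t, A k t * w t
      = (if k = j then (-1:ℚ) else 0) - (if k = i then (-1:ℚ) else 0) := by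
    intro k
    rw [← hu k, ← hui k, ← Finset.sum_sub_distrib]
    exact Finset.sum_congr rfl fun t _ => by simp only [hw]; ring
  -- F1 : ui j = u i
  have hF1 : ui j = u i := by
    have e1 : ∀ (x y : Fin n → ℚ) (c : Fin n → ℚ),
        (∀ k, ∑ t, A k t * y t = c k) →
        ∑ k, ∑ t, x k * A k t * y t = ∑ k, x k * c k := by
      intro x y c hc
      refine Finset.sum_congr rfl fun k _ => ?_
      rw [← hc k, Finset.mul_sum]
      exact Finset.sum_congr rfl fun t _ => by ring
    have h1 : ∑ k, ∑ t, ui k * A k t * u t = -ui j := by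
      rw [e1 ui u _ hu]
      exact sum_single ui j
    have h2 : ∑ k, ∑ t, u k * A k t * ui t = -u i := by
      rw [e1 u ui _ hui]
      exact sum_single u i
    have := bilin_swap hsym ui u
    rw [h1, h2] at this
    linarith
  have hwj : w j = 0 := by
    simp only [hw]
    rw [hF1]
    linarith
  -- F2 : w ≤ 0
  have hwle : ∀ k, w k ≤ 0 := by
    have key := trick hoff hneg (fun k => ui k - u k) ?_
    · intro k
      have := key k
      simp only [hw]
      linarith
    · intro k hk
      have hkj : k ≠ j := by
        intro h
        rw [h] at hk
        have h9 : ui j - u j = 0 := by rw [hF1]; linarith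
        rw [h9] at hk
        exact lt_irrefl 0 hk
      have : ∑ t, A k t * (ui t - u t)
          = (if k = i then (-1:ℚ) else 0) - (if k = j then (-1:ℚ) else 0) := by
        rw [← hui k, ← hu k, ← Finset.sum_sub_distrib]
        exact Finset.sum_congr rfl fun t _ => by ring
      rw [this, if_neg hkj, sub_zero]
      split <;> norm_num
  -- F3 : gamma-orthogonality
  have hsum0 : ∑ k, w k * (∑ t, A k t) = 0 := by
    have lhs : ∑ k, ∑ t, (fun _ => (1:ℚ)) k * A k t * w t = 0 := by
      have : ∀ k, ∑ t, (fun _ => (1:ℚ)) k * A k t * w t = ∑ t, A k t * w t := by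
        intro k
        exact Finset.sum_congr rfl fun t _ => by ring
      rw [Finset.sum_congr rfl fun k _ => this k]
      rw [Finset.sum_congr rfl fun k _ => hAw k]
      rw [Finset.sum_sub_distrib]
      simp
    have rhs : ∑ k, ∑ t, w k * A k t * (fun _ => (1:ℚ)) t = ∑ k, w k * (∑ t, A k t) := by
      refine Finset.sum_congr rfl fun k _ => ?_
      rw [Finset.mul_sum]
      exact Finset.sum_congr rfl fun t _ => by ring
    have := bilin_swap hsym (fun _ => (1:ℚ)) w
    rw [lhs, rhs] at this
    linarith
  have hterm : ∀ k, w k * (∑ t, A k t) = 0 := by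
    have hnn : ∀ k ∈ Finset.univ, (0:ℚ) ≤ w k * (∑ t, A k t) := by
      intro k _
      exact mul_nonneg_iff.2 (Or.inr ⟨hwle k, hC k⟩)
    intro k
    exact (Finset.sum_eq_zero_iff_of_nonneg hnn).1 hsum0 k (Finset.mem_univ k)
  have hwp : w p = 0 := by
    rcases mul_eq_zero.1 (hterm p) with h | h
    · exact h
    · exact absurd h (ne_of_lt hp)
  have hwq : w q = 0 := by
    rcases mul_eq_zero.1 (hterm q) with h | h
    · exact h
    · exact absurd h (ne_of_lt hq)
  -- F5 : w i ≠ 0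
  have hwi : w i ≠ 0 := by
    intro h0
    have hQ : ∑ k, ∑ t, w k * A k t * w t = 0 := by
      have e2 : ∀ k, ∑ t, w k * A k t * w t = w k * ∑ t, A k t * w t := by
        intro k
        rw [Finset.mul_sum]
        exact Finset.sum_congr rfl fun t _ => by ring
      rw [Finset.sum_congr rfl fun k _ => e2 k]
      rw [Finset.sum_congr rfl fun k _ => by rw [hAw k]]
      have : ∀ k, w k * ((if k = j then (-1:ℚ) else 0) - (if k = i then (-1:ℚ) else 0))
          = w k * (if k = j then (-1:ℚ) else 0) - w k * (if k = i then (-1:ℚ) else 0) := by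
        intro k; ring
      rw [Finset.sum_congr rfl fun k _ => this k, Finset.sum_sub_distrib,
        sum_single w j, sum_single w i, hwj, h0]
      ring
    have hw0 : w = 0 := qzero hneg w (le_of_eq hQ.symm)
    have := hAw i
    rw [hw0] at this
    simp only [Pi.zero_apply, mul_zero, Finset.sum_const_zero] at this
    simp [hij] at this
  -- F6 : propagation
  haveI : DecidableRel (dualGraph A).Adj := Classical.decRel _
  set Z : Finset (Fin n) := Finset.univ.filter (fun k => w k = 0) with hZ
  have hcl : ∀ k ∈ Z, k ≠ j → ∀ t, (dualGraph A).Adj k t → t ∈ Z := by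
    intro k hk hkj t hadj
    have hwk : w k = 0 := (Finset.mem_filter.1 hk).2
    have hAwk : ∑ t, A k t * w t = if k = i then (1:ℚ) else 0 := by
      rw [hAw k, if_neg hkj]
      split <;> norm_num
    have hge : (0:ℚ) ≤ ∑ t, A k t * w t := by
      rw [hAwk]
      split <;> norm_num
    have hterms : ∀ t ∈ Finset.univ, A k t * w t ≤ 0 := by
      intro s _
      rcases eq_or_ne s k with rfl | hne
      · rw [hwk, mul_zero]
      · exact mul_nonpos_iff.2 (Or.inl ⟨hoff k s (Ne.symm hne), hwle s⟩)
    have heq0 : ∑ t, A k t * w t = 0 :=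
      le_antisymm (Finset.sum_nonpos hterms) hge
    have hallz := (Finset.sum_eq_zero_iff_of_nonpos hterms).1 heq0 t (Finset.mem_univ t)
    have hApos : 0 < A k t := ((adj_iff hsym).1 hadj).2
    have : w t = 0 := by
      rcases mul_eq_zero.1 hallz with h | h
      · exact absurd h (ne_of_gt hApos)
      · exact h
    exact Finset.mem_filter.2 ⟨Finset.mem_univ t, this⟩
  have hrZ : ∃ r, r ≠ j ∧ r ∈ Z := by
    by_cases hpj : p = j
    · refine ⟨q, ?_, Finset.mem_filter.2 ⟨Finset.mem_univ q, hwq⟩⟩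
      intro h
      exact hpq (hpj.trans h.symm)
    · exact ⟨p, hpj, Finset.mem_filter.2 ⟨Finset.mem_univ p, hwp⟩⟩
  obtain ⟨r, hrj, hrZmem⟩ := hrZ
  have hiZ : i ∈ Z := graph_key hconn hcycle hrj hij Z
    (Finset.mem_filter.2 ⟨Finset.mem_univ j, hwj⟩) hrZmem hcl
  exact hwi (Finset.mem_filter.1 hiZ).2

end Analytic

theorem cycle_NN_iff (n : ℕ) (hn : 3 ≤ n) (A : Matrix (Fin n) (Fin n) ℚ)
    (hsym : ∀ i j, A i j = A j i) (hdiag : ∀ i, A i i < 0)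
    (hoff : ∀ i j, i ≠ j → 0 ≤ A i j) (hneg : NegDefQ A)
    (hconn : (dualGraph A).Connected)
    (hcycle : ∀ i : Fin n, ∃ j k : Fin n, j ≠ k ∧
      ∀ m : Fin n, (dualGraph A).Adj i m ↔ (m = j ∨ m = k))
    (hC : ∀ i, ∑ j, A i j ≤ 0) :
    NashNNAll A ↔ ∃ i j : Fin n, i ≠ j ∧ ∑ t, A i t < 0 ∧ ∑ t, A j t < 0 := by
  constructor
  · intro hNN
    -- at least one negative row sum
    have hex : ∃ i0, ∑ t, A i0 t < 0 := by
      by_contra hc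
      push_neg at hc
      have hz : ∀ k, ∑ t, A k t = 0 := fun k => le_antisymm (hC k) (hc k)
      have hone : (fun _ : Fin n => (1:ℚ)) ≠ 0 := by
        intro h
        have := congrFun h ⟨0, by omega⟩
        norm_num at this
      have := qneg hneg (fun _ => 1) hone
      have hzero : ∑ k, ∑ t, (1:ℚ) * A k t * 1 = 0 := by
        have : ∀ k, ∑ t, (1:ℚ) * A k t * 1 = ∑ t, A k t := by
          intro k
          exact Finset.sum_congr rfl fun t _ => by ring
        rw [Finset.sum_congr rfl fun k _ => this k]
        rw [Finset.sum_congr rfl fun k _ => hz k]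
        simp
      rw [hzero] at this
      exact lt_irrefl 0 this
    obtain ⟨i0, hi0⟩ := hex
    by_contra hgoal
    push_neg at hgoal
    have hzero : ∀ k, k ≠ i0 → ∑ t, A k t = 0 := by
      intro k hk
      refine le_antisymm (hC k) ?_
      by_contra hlt
      push_neg at hlt
      exact absurd hlt (not_lt.2 (hgoal i0 k (Ne.symm hk) hi0))
    obtain ⟨j0, hj0⟩ := Fintype.exists_ne_of_one_lt_card
      (by simp; omega) i0
    obtain ⟨X, hXpos, hXle, hXlt⟩ := hNN j0 i0 hj0 (fun _ => 0) (fun _ => le_refl 0)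
    have hY := trick hoff hneg (fun k => (X k : ℚ) - (X i0 : ℚ)) ?_
    · have := hY j0
      simp only [sub_nonneg] at this
      have : (X i0 : ℚ) ≤ (X j0 : ℚ) := by exact_mod_cast this
      have hlt' : (X j0 : ℚ) < (X i0 : ℚ) := by exact_mod_cast hXlt
      linarith
    · intro k hk
      have hki0 : k ≠ i0 := by
        intro h
        rw [h] at hk
        simp at hk
      have : ∑ t, A k t * ((X t : ℚ) - (X i0 : ℚ))
          = (∑ t, A k t * (X t : ℚ)) - (X i0 : ℚ) * (∑ t, A k t) := by
        rw [Finset.mul_sum, ← Finset.sum_sub_distrib]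
        exact Finset.sum_congr rfl fun t _ => by ring
      rw [this, hzero k hki0, mul_zero, sub_zero]
      exact hXle k
  · rintro ⟨p, q, hpq, hp, hq⟩ i j hij C hCle
    obtain ⟨u, hu0, hAu, huij⟩ := exists_u hsym hdiag hoff hneg hconn hcycle hC hpq hp hq hij
    obtain ⟨z, hz0, hAz⟩ := exists_z hoff hneg hdiag
    set s : ℚ := (max (z i - z j) 0 + 1) / (u j - u i) with hs
    have hds : 0 < u j - u i := by linarith
    have hspos : 0 < s := by
      apply div_pos ?_ hds
      have := le_max_right (z i - z j) 0
      linarith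
    set v : Fin n → ℚ := fun k => s * u k + z k with hv
    have hvk : ∀ k, v k = s * u k + z k := fun _ => rfl
    have hvpos : ∀ k, 0 < v k := by
      intro k
      have h1 : 0 ≤ s * u k := mul_nonneg (le_of_lt hspos) (hu0 k)
      rw [hvk k]
      linarith [hz0 k]
    have hAv : ∀ k, ∑ t, A k t * v t ≤ -1 := by
      intro k
      have : ∑ t, A k t * v t = s * (∑ t, A k t * u t) + ∑ t, A k t * z t := by
        rw [Finset.mul_sum, ← Finset.sum_add_distrib]
        exact Finset.sum_congr rfl fun t _ => by rw [hvk t]; ring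
      rw [this, hAu k, hAz k]
      have : s * (if k = j then (-1:ℚ) else 0) ≤ 0 := by
        split
        · linarith
        · simp
      linarith
    have hvij : v i < v j := by
      rw [hvk i, hvk j]
      have hcalc : s * (u j - u i) = max (z i - z j) 0 + 1 :=
        div_mul_cancel₀ _ (ne_of_gt hds)
      have hexp : s * (u j - u i) = s * u j - s * u i := by ring
      have hmax := le_max_left (z i - z j) 0
      linarith
    -- integerization
    set d : ℕ := ∏ k, (v k).den with hd
    have hdpos : 0 < d := Finset.prod_pos fun k _ => (v k).pos
    have hdvd : ∀ k, (v k).den ∣ d := fun k => Finset.dvd_prod_of_mem _ (Finset.mem_univ k)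
    set m : ℕ := ⌈∑ t, -C t⌉₊ with hm
    have hmge : ∀ k, -C k ≤ (m : ℚ) + 1 := by
      intro k
      have h1 : -C k ≤ ∑ t, -C t := by
        apply Finset.single_le_sum (f := fun t => -C t)
          (fun t _ => by simpa using neg_nonneg.2 (hCle t)) (Finset.mem_univ k)
      have h2 : (∑ t, -C t) ≤ (m : ℚ) := Nat.le_ceil _
      linarith
    set F : ℕ := d * (m + 1) with hF
    have hFpos : 0 < F := Nat.mul_pos hdpos (Nat.succ_pos m)
    have hFQ : (0:ℚ) < F := by exact_mod_cast hFpos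
    have hFC : ∀ k, -C k ≤ (F : ℚ) := by
      intro k
      have h1 : (m : ℚ) + 1 ≤ F := by
        have : (m + 1 : ℕ) ≤ F := Nat.le_mul_of_pos_left _ hdpos
        exact_mod_cast this
      linarith [hmge k]
    have hXQ : ∀ k, (((v k).num * ((d / (v k).den : ℕ) : ℤ) * ((m:ℤ)+1) : ℤ) : ℚ)
        = v k * F := by
      intro k
      have hden : ((v k).den : ℚ) ≠ 0 := by
        have : (v k).den ≠ 0 := Nat.pos_iff_ne_zero.1 (v k).pos
        exact_mod_cast this
      have h9 : (v k) * ((v k).den : ℚ) = ((v k).num : ℚ) := by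
        nth_rewrite 1 [← Rat.num_div_den (v k)]
        field_simp
      have hdd : (((v k).den : ℚ)) * ((d / (v k).den : ℕ) : ℚ) = (d : ℚ) := by
        rw [← Nat.cast_mul]
        congr 1
        exact Nat.mul_div_cancel' (hdvd k)
      push_cast
      calc ((v k).num : ℚ) * ((d / (v k).den : ℕ) : ℚ) * ((m:ℚ)+1)
          = (v k * ((v k).den : ℚ)) * ((d / (v k).den : ℕ) : ℚ) * ((m:ℚ)+1) := by rw [h9]
        _ = v k * ((((v k).den : ℚ)) * ((d / (v k).den : ℕ) : ℚ)) * ((m:ℚ)+1) := by ring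
        _ = v k * (d : ℚ) * ((m:ℚ)+1) := by rw [hdd]
        _ = v k * ((d:ℚ) * ((m:ℚ)+1)) := by ring
        _ = v k * ((F:ℚ)) := by rw [hF]; push_cast; ring
    refine ⟨fun k => (v k).num * ((d / (v k).den : ℕ) : ℤ) * ((m:ℤ)+1), ?_, ?_, ?_⟩
    · intro k
      have h1 : (0:ℚ) < v k * F := mul_pos (hvpos k) hFQ
      rw [← hXQ k] at h1
      exact_mod_cast h1
    · intro k
      have hsum : ∑ t, A k t * (((v t).num * ((d / (v t).den : ℕ) : ℤ) * ((m:ℤ)+1) : ℤ) : ℚ)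
          = (∑ t, A k t * v t) * F := by
        rw [Finset.sum_mul]
        refine Finset.sum_congr rfl fun t _ => ?_
        rw [hXQ t]
        ring
      rw [hsum]
      have h1 : (∑ t, A k t * v t) * F ≤ (-1) * F :=
        mul_le_mul_of_nonneg_right (hAv k) (le_of_lt hFQ)
      have h2 := hFC k
      linarith
    · have h1 : v i * F < v j * F := mul_lt_mul_of_pos_right hvij hFQ
      rw [← hXQ i, ← hXQ j] at h1
      exact_mod_cast h1
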